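/- Let G be a finite group and V a finite-dimensional complex representation of G (a finite-dimensional module over MonoidAlgebra ℂ G). If the ring of G-equivariant linear endomorphisms of V is commutative, then any two distinct simple G-submodules W₁ ≠ W₂ of V are non-isomorphic as G-representations (i.e., V is multiplicity-free). -/

import Mathlib

open MonoidAlgebra

/-- Maschke averaging, universe-flexible version: any `MonoidAlgebra ℂ G`-submodule of a
finite-dimensional complex representation admits an equivariant projection onto it. -/
lemma exists_equivariant_projection
    {G : Type*} [Group G] [Fintype G] {V : Type*} [AddCommGroup V]
    [Module ℂ V] [Module (MonoidAlgebra ℂ G) V] [IsScalarTower ℂ (MonoidAlgebra ℂ G) V]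
    [FiniteDimensional ℂ V] (W : Submodule (MonoidAlgebra ℂ G) V) :
    ∃ p : Module.End (MonoidAlgebra ℂ G) V,
      (∀ v : V, p v ∈ W) ∧ (∀ w : V, w ∈ W → p w = w) := by
  -- first, a ℂ-linear projection onto W
  obtain ⟨C, hC⟩ := Submodule.exists_isCompl (W.restrictScalars ℂ)
  set π₀ : V →ₗ[ℂ] V :=
    (W.restrictScalars ℂ).subtype ∘ₗ (W.restrictScalars ℂ).projectionOnto C hC with hπ₀
  have hπ₀mem : ∀ v : V, π₀ v ∈ W := fun v => ((W.restrictScalars ℂ).projectionOnto C hC v).2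
  have hπ₀id : ∀ w : V, w ∈ W → π₀ w = w := fun w hw => by
    simp [hπ₀, Submodule.projectionOnto_apply_of_mem_left hC hw, Submodule.projection_apply_of_mem_left hC hw]
  -- sum of conjugates
  set f : V →ₗ[ℂ] V := ∑ g : G,
    (GroupSMul.linearMap ℂ V g⁻¹) ∘ₗ π₀ ∘ₗ (GroupSMul.linearMap ℂ V g) with hf
  have hfapp : ∀ v : V, f v = ∑ g : G, single g⁻¹ (1:ℂ) • π₀ (single g (1:ℂ) • v) := by
    intro v; rw [hf]; simp [LinearMap.sum_apply]
  have hequiv : ∀ (g : G) (v : V), f (single g (1:ℂ) • v) = single g (1:ℂ) • f v := by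
    intro g v
    rw [hfapp, hfapp, Finset.smul_sum]
    refine Fintype.sum_bijective (· * g) (Group.mulRight_bijective g) _ _ fun i => ?_
    simp only [smul_smul, single_mul_single, mul_inv_rev, mul_inv_cancel_left, one_mul]
  set p : Module.End (MonoidAlgebra ℂ G) V :=
    ((Fintype.card G : ℂ)⁻¹) • equivariantOfLinearOfComm f hequiv with hp
  have hcard : (Fintype.card G : ℂ) ≠ 0 := by
    exact_mod_cast Nat.cast_ne_zero.mpr Fintype.card_ne_zero
  refine ⟨p, fun v => ?_, fun w hw => ?_⟩
  · have : f v ∈ W := by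
      rw [hfapp]
      exact Submodule.sum_mem _ fun g _ => W.smul_mem _ (hπ₀mem _)
    have h2 : p v = (Fintype.card G : ℂ)⁻¹ • f v := rfl
    rw [h2, ← algebraMap_smul (MonoidAlgebra ℂ G) ((Fintype.card G : ℂ)⁻¹) (f v)]
    exact W.smul_mem _ this
  · have hfw : f w = (Fintype.card G : ℂ) • w := by
      rw [hfapp]
      have : ∀ g : G, single g⁻¹ (1:ℂ) • π₀ (single g (1:ℂ) • w) = w := by
        intro g
        rw [hπ₀id _ (W.smul_mem _ hw), smul_smul, single_mul_single, inv_mul_cancel, mul_one,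
          ← one_def, one_smul]
      rw [Finset.sum_congr rfl fun g _ => this g]
      simp [Finset.card_univ, ← Nat.cast_smul_eq_nsmul ℂ]
    have : p w = (Fintype.card G : ℂ)⁻¹ • ((Fintype.card G : ℂ) • w) := by
      simp only [hp, LinearMap.smul_apply]
      rw [show (equivariantOfLinearOfComm f hequiv) w = f w from rfl, hfw]
    rw [this, smul_smul, inv_mul_cancel₀ hcard, one_smul]

/-- If the ring of `G`-equivariant endomorphisms of a finite-dimensional complex
representation `V` of a finite group `G` is commutative, then any two distinct simple
`G`-submodules of `V` are non-isomorphic as representations, i.e. `V` is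
multiplicity-free. -/
theorem multiplicity_free_of_commutative_endomorphisms
    {G : Type*} [Group G] [Fintype G] {V : Type*} [AddCommGroup V]
    [Module ℂ V] [Module (MonoidAlgebra ℂ G) V] [IsScalarTower ℂ (MonoidAlgebra ℂ G) V]
    [FiniteDimensional ℂ V]
    (hcomm : ∀ f g : Module.End (MonoidAlgebra ℂ G) V, f * g = g * f)
    (W₁ W₂ : Submodule (MonoidAlgebra ℂ G) V)
    (h₁ : IsSimpleModule (MonoidAlgebra ℂ G) W₁)
    (h₂ : IsSimpleModule (MonoidAlgebra ℂ G) W₂)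
    (hne : W₁ ≠ W₂) :
    IsEmpty (W₁ ≃ₗ[MonoidAlgebra ℂ G] W₂) := by
  constructor
  intro φ
  -- the intersection is trivial
  have hdisj : W₁ ⊓ W₂ = ⊥ := disjoint_iff.mp
    ((isSimpleModule_iff_isAtom.mp h₁).disjoint_of_ne (isSimpleModule_iff_isAtom.mp h₂) hne)
  obtain ⟨p, hpmem, hpid⟩ := exists_equivariant_projection (G := G) W₁
  set f : Module.End (MonoidAlgebra ℂ G) V :=
    W₂.subtype ∘ₗ φ.toLinearMap ∘ₗ (p.codRestrict W₁ hpmem) with hfdef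
  have : Nontrivial W₁ := IsSimpleModule.nontrivial (MonoidAlgebra ℂ G) W₁
  obtain ⟨⟨w, hw⟩, hwne⟩ := exists_ne (0 : W₁)
  have hwV : w ≠ 0 := by
    intro h; apply hwne; ext; exact h
  have hcw := congrArg (fun m => m w) (hcomm f p)
  simp only [Module.End.mul_apply] at hcw
  -- f (p w) = p (f w)
  have hpw : p w = w := hpid w hw
  have hfw : f w = (φ ⟨w, hw⟩ : V) := by
    have hcr : (LinearMap.codRestrict W₁ p hpmem) w = ⟨w, hw⟩ := Subtype.ext hpw
    simp only [hfdef, LinearMap.coe_comp, Function.comp_apply, Submodule.coe_subtype, hcr]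
    rfl
  have hleft : f (p w) = (φ ⟨w, hw⟩ : V) := by rw [hpw, hfw]
  have hmem1 : (φ ⟨w, hw⟩ : V) ∈ W₁ := by
    rw [← hleft, hcw]
    exact hpmem _
  have hmem2 : (φ ⟨w, hw⟩ : V) ∈ W₂ := (φ ⟨w, hw⟩).2
  have hb : (φ ⟨w, hw⟩ : V) ∈ W₁ ⊓ W₂ := ⟨hmem1, hmem2⟩
  rw [hdisj] at hb
  have hz : φ ⟨w, hw⟩ = 0 := Subtype.ext (by simpa using hb)
  exact hwne (φ.map_eq_zero_iff.mp hz)
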